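/- Let a, b, k, m, p be positive real numbers. Then ∫₀^∞ x^{2k−1} Q_m(a x, b) e^{−p x²} dx = Σ_{l=0}^∞ a^{2l} · 2^{k−1} · Γ(k+l) · Γ(m+l, b²/2) / ( l! · Γ(m+l) · (a²+2p)^{k+l} ), where the integral on the left converges and the series on the right converges. -/

import Mathlib

open MeasureTheory Real Filter

/-- Upper incomplete gamma function `Γ(s,x) = ∫_x^∞ t^(s-1) e^(-t) dt`. -/
noncomputable def uGamma (s x : ℝ) : ℝ := ∫ t in Set.Ioi x, t ^ (s - 1) * Real.exp (-t)

/-- Generalized Marcum Q-function, defined by its canonical series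
`Q_m(a,b) = Σ_{l=0}^∞ e^{-a²/2} (a²/2)^l / l! · Γ(m+l, b²/2)/Γ(m+l)`. -/
noncomputable def marcumQ (m a b : ℝ) : ℝ :=
  ∑' l : ℕ, Real.exp (-(a ^ 2) / 2) * (a ^ 2 / 2) ^ l / (Nat.factorial l) *
    (uGamma (m + l) (b ^ 2 / 2) / Real.Gamma (m + l))

/-- Pochhammer symbol `(x)_n = Γ(x+n)/Γ(x)`. -/
noncomputable def poch (x : ℝ) (n : ℕ) : ℝ := Real.Gamma (x + n) / Real.Gamma x

/-- Kummer confluent hypergeometric function `₁F₁(α,β,z) = Σ_n (α)_n z^n / ((β)_n n!)`. -/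
noncomputable def kummer (α β z : ℝ) : ℝ :=
  ∑' n : ℕ, poch α n * z ^ n / (poch β n * Nat.factorial n)

/-- Modified Bessel function of the first kind
`I_ν(z) = Σ_j (z/2)^(ν+2j) / (j! Γ(ν+j+1))`. -/
noncomputable def besselI (ν z : ℝ) : ℝ :=
  ∑' j : ℕ, (z / 2) ^ (ν + 2 * j) / (Nat.factorial j * Real.Gamma (ν + j + 1))

open Set Topology in
lemma gauss_moment {s c : ℝ} (hs : 0 < s) (hc : 0 < c) :
    ∫ x in Set.Ioi (0:ℝ), x ^ (2*s - 1) * Real.exp (-c * x ^ 2)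
      = Real.Gamma s / (2 * c ^ s) := by
  have h := integral_rpow_mul_exp_neg_mul_rpow (p := 2) (q := 2*s - 1) zero_lt_two
    (by linarith) hc
  simp_rw [Real.rpow_two] at h
  rw [h, show (-(2*s-1+1)/2 : ℝ) = -s by ring, show ((2*s-1+1)/2 : ℝ) = s by ring,
    Real.rpow_neg hc.le]
  have : (c:ℝ) ^ s ≠ 0 := (Real.rpow_pos_of_pos hc s).ne'
  field_simp

lemma uGamma_nonneg {s x : ℝ} (hx : 0 ≤ x) : 0 ≤ uGamma s x :=
  setIntegral_nonneg measurableSet_Ioi fun t ht =>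
    mul_nonneg (Real.rpow_nonneg (hx.trans ht.le) _) (Real.exp_pos _).le

open Set in
lemma uGamma_le_Gamma {s x : ℝ} (hs : 0 < s) (hx : 0 ≤ x) : uGamma s x ≤ Real.Gamma s := by
  have hint : IntegrableOn (fun t : ℝ => t ^ (s-1) * Real.exp (-t)) (Set.Ioi 0) := by
    have := Real.GammaIntegral_convergent hs
    simpa [mul_comm] using this
  have h1 : uGamma s x ≤ ∫ t in Set.Ioi (0:ℝ), t ^ (s-1) * Real.exp (-t) := by
    refine setIntegral_mono_set hint ?_ (HasSubset.Subset.eventuallyLE (Ioi_subset_Ioi hx))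
    filter_upwards [ae_restrict_mem measurableSet_Ioi] with t ht
    exact mul_nonneg (Real.rpow_nonneg (le_of_lt ht) _) (Real.exp_pos _).le
  rw [Real.Gamma_eq_integral hs]
  simpa [mul_comm] using h1

open Set Topology in
lemma summable_S {a k c : ℝ} (ha : 0 < a) (hk : 0 < k) (hc : a^2 < c) :
    Summable (fun l : ℕ => a ^ (2*l) * Real.Gamma (k + l) / (Nat.factorial l * c ^ (k + l))) := by
  have hc0 : 0 < c := lt_trans (by positivity) hc
  set S : ℕ → ℝ := fun l => a ^ (2*l) * Real.Gamma (k + l) / (Nat.factorial l * c ^ (k + l))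
    with hS
  have hpos : ∀ l : ℕ, 0 < S l := by
    intro l
    have h1 : (0:ℝ) < Real.Gamma (k + l) := Real.Gamma_pos_of_pos (by positivity)
    have h2 : (0:ℝ) < c ^ (k + (l:ℝ)) := Real.rpow_pos_of_pos hc0 _
    have h3 : (0:ℝ) < (Nat.factorial l : ℝ) := by positivity
    simp only [hS]
    positivity
  have hratio : ∀ l : ℕ, S (l+1) = S l * (a^2 * (k + l) / ((l+1) * c)) := by
    intro l
    have hkl : k + (l:ℝ) ≠ 0 := by positivity
    have hG : Real.Gamma (k + ((l:ℕ)+1:ℕ)) = (k + l) * Real.Gamma (k + l) := by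
      rw [show (k + (((l:ℕ)+1:ℕ)) : ℝ) = (k + l) + 1 by push_cast; ring,
        Real.Gamma_add_one hkl]
    have hcp : c ^ (k + (((l:ℕ)+1:ℕ):ℝ)) = c ^ (k + (l:ℝ)) * c := by
      rw [show (k + (((l:ℕ)+1:ℕ):ℝ)) = (k + l) + 1 by push_cast; ring,
        Real.rpow_add_one hc0.ne']
    have hf : (((l+1).factorial : ℕ) : ℝ) = ((l:ℝ)+1) * (l.factorial : ℝ) := by
      rw [Nat.factorial_succ]; push_cast; ring
    have hfl : (l.factorial : ℝ) ≠ 0 := by positivity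
    have hcl : c ^ (k + (l:ℝ)) ≠ 0 := (Real.rpow_pos_of_pos hc0 _).ne'
    have hl1 : ((l:ℝ)+1) ≠ 0 := by positivity
    simp only [hS]
    rw [hG, hcp, hf, show 2*(l+1) = 2*l+2 by ring, pow_add]
    field_simp
  have hlt : a^2/c < 1 := (div_lt_one hc0).mpr hc
  refine summable_of_ratio_test_tendsto_lt_one hlt
    (Filter.Eventually.of_forall fun l => (hpos l).ne') ?_
  have heq : ∀ n : ℕ, ‖S (n+1)‖ / ‖S n‖ = (a^2/c) * ((k+n)/((n:ℝ)+1)) := by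
    intro n
    rw [Real.norm_of_nonneg (hpos _).le, Real.norm_of_nonneg (hpos _).le, hratio,
      mul_comm (S n), mul_div_assoc, div_self (hpos n).ne', mul_one]
    have hl1 : ((n:ℝ)+1) ≠ 0 := by positivity
    field_simp
  rw [tendsto_congr heq]
  have h1 : Tendsto (fun n : ℕ => (k + (n:ℝ))/((n:ℝ)+1)) atTop (𝓝 1) := by
    have he : ∀ n:ℕ, (k + (n:ℝ))/((n:ℝ)+1) = 1 + (k-1) * (1/((n:ℝ)+1)) := by
      intro n
      have : ((n:ℝ)+1) ≠ 0 := by positivity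
      field_simp
      ring
    rw [tendsto_congr he]
    simpa using
      (tendsto_const_nhds (x := (1:ℝ))).add
        (tendsto_one_div_add_atTop_nhds_zero_nat.const_mul (k-1))
  simpa using (tendsto_const_nhds (x := a^2/c)).mul h1

open Set in
lemma term_integral {a b k m p : ℝ} (ha : 0 < a) (hk : 0 < k) (hm : 0 < m) (hp : 0 < p) (l : ℕ) :
    IntegrableOn (fun x : ℝ => x ^ (2*k-1) *
      (Real.exp (-((a*x) ^ 2) / 2) * ((a*x) ^ 2 / 2) ^ l / (Nat.factorial l) *
        (uGamma (m + l) (b ^ 2 / 2) / Real.Gamma (m + l))) * Real.exp (-p * x ^ 2)) (Set.Ioi 0)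
    ∧ (∫ x in Set.Ioi (0:ℝ), x ^ (2*k-1) *
      (Real.exp (-((a*x) ^ 2) / 2) * ((a*x) ^ 2 / 2) ^ l / (Nat.factorial l) *
        (uGamma (m + l) (b ^ 2 / 2) / Real.Gamma (m + l))) * Real.exp (-p * x ^ 2)) =
      a ^ (2*l) * 2 ^ (k-1) * Real.Gamma (k + l) * uGamma (m + l) (b^2/2) /
        (Nat.factorial l * Real.Gamma (m + l) * (a^2+2*p) ^ (k + l)) := by
  set U : ℝ := uGamma (m + l) (b^2/2) with hU
  set C : ℝ := (a^2/2)^l / (Nat.factorial l) * (U / Real.Gamma (m + l)) with hC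
  set c2 : ℝ := a^2/2 + p with hc2def
  have hc2 : 0 < c2 := by positivity
  have hkl : (0:ℝ) < k + l := by positivity
  have hEq : EqOn (fun x : ℝ => C * (x ^ (2*(k+(l:ℝ)) - 1) * Real.exp (-c2 * x^2)))
      (fun x : ℝ => x ^ (2*k-1) *
      (Real.exp (-((a*x) ^ 2) / 2) * ((a*x) ^ 2 / 2) ^ l / (Nat.factorial l) *
        (U / Real.Gamma (m + l))) * Real.exp (-p * x ^ 2)) (Set.Ioi 0) := by
    intro x hx
    have hx0 : (0:ℝ) < x := hx
    have h1 : ((a*x)^2/2)^l = (a^2/2)^l * x^(2*l) := by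
      rw [mul_pow a x, pow_mul]
      ring
    have h2 : Real.exp (-((a*x)^2) / 2) * Real.exp (-p*x^2) = Real.exp (-c2 * x^2) := by
      rw [← Real.exp_add]
      congr 1
      rw [hc2def, mul_pow]
      ring
    have h3 : x ^ (2*k-1) * x^(2*l) = x ^ (2*(k+(l:ℝ)) - 1) := by
      rw [← Real.rpow_natCast x (2*l), ← Real.rpow_add hx0]
      congr 1
      push_cast
      ring
    simp only [hC]
    rw [← h3, ← h2, h1]
    ring
  have hG : IntegrableOn
      (fun x : ℝ => C * (x ^ (2*(k+(l:ℝ)) - 1) * Real.exp (-c2 * x^2))) (Set.Ioi 0) :=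
    (integrableOn_rpow_mul_exp_neg_mul_sq hc2
      (by linarith : (-1:ℝ) < 2*(k+(l:ℝ)) - 1)).const_mul C
  refine ⟨hG.congr_fun hEq measurableSet_Ioi, ?_⟩
  rw [← setIntegral_congr_fun measurableSet_Ioi hEq, integral_const_mul,
    gauss_moment hkl hc2]
  have h2c : a^2 + 2*p = 2 * c2 := by rw [hc2def]; ring
  have h2k : ((a^2+2*p):ℝ) ^ (k+(l:ℝ)) = 2^(k-1) * 2^(l:ℕ) * 2 * c2 ^ (k+(l:ℝ)) := by
    rw [h2c, mul_rpow (by norm_num) hc2.le]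
    congr 1
    rw [show k + (l:ℝ) = (k-1) + l + 1 by ring, Real.rpow_add two_pos, Real.rpow_add two_pos,
      Real.rpow_one, Real.rpow_natCast]
  rw [hC, h2k]
  have hfl : ((Nat.factorial l : ℕ):ℝ) ≠ 0 := by positivity
  have hGm : Real.Gamma (m + l) ≠ 0 := (Real.Gamma_pos_of_pos (by positivity)).ne'
  have hcl : c2 ^ (k + (l:ℝ)) ≠ 0 := (Real.rpow_pos_of_pos hc2 _).ne'
  have h2l : ((2:ℝ))^(l:ℕ) ≠ 0 := by positivity
  have h2k1 : ((2:ℝ))^(k-1) ≠ 0 := (Real.rpow_pos_of_pos two_pos _).ne'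
  have hal : (a^2/2)^l = a^(2*l) / 2^(l:ℕ) := by
    rw [div_pow, pow_mul]
  rw [hal]
  field_simp

open Set Topology in
/-- exact infinite series representation of
`∫₀^∞ x^(2k-1) Q_m(ax,b) e^(-px²) dx` for arbitrary positive reals `a,b,k,m,p`. -/
theorem integral_marcumQ_series (a b k m p : ℝ)
    (ha : 0 < a) (hb : 0 < b) (hk : 0 < k) (hm : 0 < m) (hp : 0 < p) :
    IntegrableOn
      (fun x : ℝ => x ^ (2 * k - 1) * marcumQ m (a * x) b * Real.exp (-p * x ^ 2))
      (Set.Ioi 0) ∧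
    Summable (fun l : ℕ =>
      a ^ (2 * l) * 2 ^ (k - 1) * Real.Gamma (k + l) * uGamma (m + l) (b ^ 2 / 2) /
        (Nat.factorial l * Real.Gamma (m + l) * (a ^ 2 + 2 * p) ^ (k + l))) ∧
    ∫ x in Set.Ioi (0 : ℝ),
        x ^ (2 * k - 1) * marcumQ m (a * x) b * Real.exp (-p * x ^ 2) =
      ∑' l : ℕ,
        a ^ (2 * l) * 2 ^ (k - 1) * Real.Gamma (k + l) * uGamma (m + l) (b ^ 2 / 2) /
          (Nat.factorial l * Real.Gamma (m + l) * (a ^ 2 + 2 * p) ^ (k + l)) := by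
  set G : ℕ → ℝ → ℝ := fun l x =>
    Real.exp (-((a*x) ^ 2) / 2) * ((a*x) ^ 2 / 2) ^ l / (Nat.factorial l) *
      (uGamma (m + l) (b ^ 2 / 2) / Real.Gamma (m + l)) with hGdef
  set F : ℕ → ℝ → ℝ := fun l x =>
    x ^ (2*k-1) * G l x * Real.exp (-p * x ^ 2) with hFdef
  set T : ℕ → ℝ := fun l =>
    a ^ (2 * l) * 2 ^ (k - 1) * Real.Gamma (k + l) * uGamma (m + l) (b ^ 2 / 2) /
      (Nat.factorial l * Real.Gamma (m + l) * (a ^ 2 + 2 * p) ^ (k + l)) with hTdef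
  have hInt : ∀ l : ℕ, IntegrableOn (F l) (Set.Ioi 0) := fun l =>
    (term_integral (b := b) ha hk hm hp l).1
  have hVal : ∀ l : ℕ, (∫ x in Set.Ioi (0:ℝ), F l x) = T l := fun l =>
    (term_integral (b := b) ha hk hm hp l).2
  -- Summability of T
  have hGmpos : ∀ l : ℕ, (0:ℝ) < Real.Gamma (m + l) :=
    fun l => Real.Gamma_pos_of_pos (by positivity)
  have hUnn : ∀ l : ℕ, (0:ℝ) ≤ uGamma (m + l) (b^2/2) :=
    fun l => uGamma_nonneg (by positivity)
  have hUle : ∀ l : ℕ, uGamma (m + l) (b^2/2) ≤ Real.Gamma (m + l) :=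
    fun l => uGamma_le_Gamma (by positivity) (by positivity)
  set S : ℕ → ℝ := fun l =>
    a ^ (2*l) * Real.Gamma (k + l) / (Nat.factorial l * (a^2+2*p) ^ (k + l)) with hSdef
  have hSsum : Summable S := summable_S ha hk (by nlinarith)
  have hTnn : ∀ l : ℕ, 0 ≤ T l := by
    intro l
    simp only [hTdef]
    have h1 : (0:ℝ) ≤ a ^ (2*l) * 2 ^ (k-1) * Real.Gamma (k + l) := by positivity
    refine div_nonneg (mul_nonneg h1 (hUnn l)) ?_
    have := (hGmpos l).le
    positivity
  have hTle : ∀ l : ℕ, T l ≤ 2 ^ (k-1) * S l := by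
    intro l
    have hfl : ((Nat.factorial l : ℕ):ℝ) ≠ 0 := by positivity
    have hcl : ((a^2+2*p):ℝ) ^ (k + (l:ℝ)) ≠ 0 :=
      (Real.rpow_pos_of_pos (by positivity) _).ne'
    have hid : T l = (2 ^ (k-1) * S l) * (uGamma (m + l) (b^2/2) / Real.Gamma (m + l)) := by
      simp only [hTdef, hSdef]
      field_simp
    rw [hid]
    have hS0 : (0:ℝ) ≤ 2 ^ (k-1) * S l := by
      simp only [hSdef]
      have := (Real.Gamma_pos_of_pos (show (0:ℝ) < k + l by positivity)).le
      positivity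
    calc (2 ^ (k-1) * S l) * (uGamma (m + l) (b^2/2) / Real.Gamma (m + l))
        ≤ (2 ^ (k-1) * S l) * 1 := by
          refine mul_le_mul_of_nonneg_left ?_ hS0
          exact (div_le_one (hGmpos l)).mpr (hUle l)
      _ = 2 ^ (k-1) * S l := mul_one _
  have hTsum : Summable T := Summable.of_nonneg_of_le hTnn hTle (hSsum.mul_left _)
  -- pointwise identity
  have key : ∀ x : ℝ, (∑' l : ℕ, F l x)
      = x ^ (2*k-1) * marcumQ m (a*x) b * Real.exp (-p * x ^ 2) := by
    intro x
    calc (∑' l : ℕ, F l x)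
        = ∑' l : ℕ, (x ^ (2*k-1) * Real.exp (-p * x ^ 2)) * G l x :=
          tsum_congr fun l => by simp only [hFdef]; ring
      _ = (x ^ (2*k-1) * Real.exp (-p * x ^ 2)) * ∑' l : ℕ, G l x := tsum_mul_left
      _ = x ^ (2*k-1) * marcumQ m (a*x) b * Real.exp (-p * x ^ 2) := by
          rw [marcumQ]
          ring
  -- nonnegativity of F on Ioi 0
  have hFnn : ∀ (l : ℕ) (x : ℝ), x ∈ Set.Ioi (0:ℝ) → 0 ≤ F l x := by
    intro l x hx
    simp only [hFdef, hGdef]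
    have h1 : (0:ℝ) ≤ x ^ (2*k-1) := Real.rpow_nonneg (le_of_lt hx) _
    have h2 : (0:ℝ) ≤ uGamma (m + l) (b^2/2) / Real.Gamma (m + l) :=
      div_nonneg (hUnn l) (hGmpos l).le
    positivity
  -- summability pointwise
  have hGsum : ∀ x : ℝ, Summable (fun l => G l x) := by
    intro x
    have hE : (0:ℝ) ≤ Real.exp (-((a*x)^2) / 2) := (Real.exp_pos _).le
    refine Summable.of_nonneg_of_le (fun l => ?_) (fun l => ?_)
      ((Real.summable_pow_div_factorial ((a*x)^2/2)).mul_left (Real.exp (-((a*x)^2) / 2)))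
    · simp only [hGdef]
      have := hUnn l
      have := (hGmpos l).le
      positivity
    · simp only [hGdef]
      rw [mul_div_assoc]
      refine mul_le_of_le_one_right (by positivity) ?_
      exact (div_le_one (hGmpos l)).mpr (hUle l)
  have hFsum : ∀ x : ℝ, Summable (fun l => F l x) := by
    intro x
    exact (((hGsum x).mul_left (x ^ (2*k-1))).mul_right (Real.exp (-p * x ^ 2))).congr
      (fun l => rfl)
  -- measurability
  have hmeasF : ∀ l : ℕ, Measurable (F l) := by
    intro l
    simp only [hFdef, hGdef]
    fun_prop
  have hmeasTsum : Measurable (fun x : ℝ => ∑' l : ℕ, F l x) := by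
    refine measurable_of_tendsto_metrizable' atTop
      (fun n : ℕ => Finset.measurable_sum (Finset.range n) (fun i _ => hmeasF i)) ?_
    rw [tendsto_pi_nhds]
    intro x
    exact (hFsum x).hasSum.tendsto_sum_nat
  have hmeas : Measurable
      (fun x : ℝ => x ^ (2*k-1) * marcumQ m (a*x) b * Real.exp (-p * x ^ 2)) :=
    (funext key : (fun x : ℝ => ∑' l : ℕ, F l x) = _) ▸ hmeasTsum
  -- lintegral computation
  have hlin : (∫⁻ x in Set.Ioi (0:ℝ),
      ENNReal.ofReal (x ^ (2*k-1) * marcumQ m (a*x) b * Real.exp (-p * x ^ 2)))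
      = ENNReal.ofReal (∑' l, T l) := by
    have step1 : (∫⁻ x in Set.Ioi (0:ℝ),
        ENNReal.ofReal (x ^ (2*k-1) * marcumQ m (a*x) b * Real.exp (-p * x ^ 2)))
        = ∫⁻ x in Set.Ioi (0:ℝ), ∑' l : ℕ, ENNReal.ofReal (F l x) := by
      refine lintegral_congr_ae ?_
      filter_upwards [ae_restrict_mem measurableSet_Ioi] with x hx
      rw [← key x, ENNReal.ofReal_tsum_of_nonneg (fun l => hFnn l x hx) (hFsum x)]
    rw [step1, lintegral_tsum (fun l => ((hmeasF l).ennreal_ofReal).aemeasurable)]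
    have step2 : ∀ l : ℕ, (∫⁻ x in Set.Ioi (0:ℝ), ENNReal.ofReal (F l x))
        = ENNReal.ofReal (T l) := by
      intro l
      rw [← ofReal_integral_eq_lintegral_ofReal (hInt l) ?_]
      · rw [hVal l]
      · filter_upwards [ae_restrict_mem measurableSet_Ioi] with x hx
        exact hFnn l x hx
    simp_rw [step2]
    exact (ENNReal.ofReal_tsum_of_nonneg hTnn hTsum).symm
  -- integrability of the full integrand
  have hIntegrable : IntegrableOn
      (fun x : ℝ => x ^ (2*k-1) * marcumQ m (a*x) b * Real.exp (-p * x ^ 2))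
      (Set.Ioi 0) := by
    have hnn : 0 ≤ᵐ[volume.restrict (Set.Ioi (0:ℝ))]
        (fun x : ℝ => x ^ (2*k-1) * marcumQ m (a*x) b * Real.exp (-p * x ^ 2)) := by
      filter_upwards [ae_restrict_mem measurableSet_Ioi] with x hx
      rw [← key x]
      exact tsum_nonneg (fun l => hFnn l x hx)
    refine ⟨hmeas.aestronglyMeasurable, ?_⟩
    rw [hasFiniteIntegral_iff_ofReal hnn, hlin]
    exact ENNReal.ofReal_lt_top
  -- integral identity
  have hnormint : ∀ l : ℕ, (∫ x in Set.Ioi (0:ℝ), ‖F l x‖) = T l := by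
    intro l
    rw [← hVal l]
    refine setIntegral_congr_fun measurableSet_Ioi (fun x hx => ?_)
    exact Real.norm_of_nonneg (hFnn l x hx)
  have hsumnorm : Summable (fun l : ℕ => ∫ x in Set.Ioi (0:ℝ), ‖F l x‖) := by
    rw [funext hnormint]
    exact hTsum
  have hswap := integral_tsum_of_summable_integral_norm hInt hsumnorm
  refine ⟨hIntegrable, hTsum, ?_⟩
  calc ∫ x in Set.Ioi (0 : ℝ), x ^ (2 * k - 1) * marcumQ m (a * x) b * Real.exp (-p * x ^ 2)
      = ∫ x in Set.Ioi (0:ℝ), ∑' l : ℕ, F l x :=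
        integral_congr_ae (Eventually.of_forall fun x => (key x).symm)
    _ = ∑' l : ℕ, ∫ x in Set.Ioi (0:ℝ), F l x := hswap.symm
    _ = ∑' l : ℕ, T l := tsum_congr hVal
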